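/- Let f : ℝ^d → ℝ be continuously differentiable, bounded below with infimum f_*, and μ-PL, i.e. ‖∇f(x)‖₂² ≥ 2μ(f(x) − f_*) for all x. Let X : [0, T] → ℝ^d be differentiable with X'(t) = −sign(∇f(X(t))) coordinatewise (with sign(0) = 0). Set S(t) := f(X(t)) − f_* and S₀ := S(0). Then for all t ∈ [0, T] with t ≤ 2√(S₀/μ), one has S(t) ≤ (1/4)·(√μ·t − 2√S₀)²; in particular S reaches 0 no later than t_* = 2√(S₀/μ) if T ≥ t_*. -/

import Mathlib

open Real Set

lemma mul_sign_eq_abs (x : ℝ) : x * Real.sign x = |x| := by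
  rcases lt_trichotomy x 0 with h | h | h
  · rw [Real.sign_of_neg h, abs_of_neg h]; ring
  · simp [h]
  · rw [Real.sign_of_pos h, abs_of_pos h]; ring

/-- Phase 1 of Theorem 3.12 (DSignSGD): along the sign-gradient flow
`X' t = −sign(∇f(X t))` (coordinatewise), a μ-PL function satisfies
`f(X t) − f_* ≤ (1/4)(√μ t − 2√S₀)²` for `t ≤ 2√(S₀/μ)`, so the suboptimality
reaches `0` no later than `t_* = 2√(S₀/μ)`. -/
theorem dsignsgd_phase1
    (d : ℕ) (f : EuclideanSpace ℝ (Fin d) → ℝ) (hf : ContDiff ℝ 1 f)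
    (fstar : ℝ) (hglb : IsGLB (Set.range f) fstar)
    (μ : ℝ) (hμ : 0 < μ)
    (hPL : ∀ x : EuclideanSpace ℝ (Fin d),
      2 * μ * (f x - fstar) ≤ ‖gradient f x‖ ^ 2)
    (T : ℝ) (hT : 0 ≤ T)
    (X : ℝ → EuclideanSpace ℝ (Fin d))
    (hX : ∀ t ∈ Set.Icc (0 : ℝ) T,
      HasDerivAt X
        (show EuclideanSpace ℝ (Fin d) from
          WithLp.toLp 2 (fun i => - Real.sign (gradient f (X t) i))) t) :
    (∀ t ∈ Set.Icc (0 : ℝ) T, t ≤ 2 * Real.sqrt ((f (X 0) - fstar) / μ) →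
      f (X t) - fstar
        ≤ (1 / 4) * (Real.sqrt μ * t - 2 * Real.sqrt (f (X 0) - fstar)) ^ 2) ∧
    (2 * Real.sqrt ((f (X 0) - fstar) / μ) ≤ T →
      ∃ t ∈ Set.Icc (0 : ℝ) (2 * Real.sqrt ((f (X 0) - fstar) / μ)),
        f (X t) - fstar = 0) := by
  set S : ℝ → ℝ := fun t => f (X t) - fstar with hS
  set g : ℝ → EuclideanSpace ℝ (Fin d) := fun t => gradient f (X t) with hg
  have hSnn : ∀ x, 0 ≤ f x - fstar := fun x =>
    sub_nonneg.2 (hglb.1 ⟨x, rfl⟩)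
  set a : ℝ := Real.sqrt (f (X 0) - fstar) with ha
  have ha0 : 0 ≤ a := Real.sqrt_nonneg _
  have hS0 : S 0 = a ^ 2 := (Real.sq_sqrt (hSnn (X 0))).symm
  have hμ' : (0:ℝ) < Real.sqrt μ := Real.sqrt_pos.2 hμ
  set tstar : ℝ := 2 * Real.sqrt ((f (X 0) - fstar) / μ) with htstar
  have htstar_eq : tstar = 2 * a / Real.sqrt μ := by
    rw [htstar, Real.sqrt_div (hSnn (X 0))]; ring
  have htstar0 : 0 ≤ tstar := by positivity
  -- derivative of S
  have hSd : ∀ t ∈ Icc (0:ℝ) T,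
      HasDerivAt S (-(∑ i, |g t i|)) t := by
    intro t ht
    have hdiff : DifferentiableAt ℝ f (X t) :=
      (hf.differentiable one_ne_zero).differentiableAt
    have hgrad := hdiff.hasGradientAt
    have hc := hgrad.hasFDerivAt.comp_hasDerivAt t (hX t ht)
    have hval : (InnerProductSpace.toDual ℝ (EuclideanSpace ℝ (Fin d)) (g t))
        (show EuclideanSpace ℝ (Fin d) from
          WithLp.toLp 2 (fun i => - Real.sign (gradient f (X t) i))) = -(∑ i, |g t i|) := by
      rw [InnerProductSpace.toDual_apply_apply]
      rw [PiLp.inner_apply]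
      simp only [RCLike.inner_apply, conj_trivial]
      rw [← Finset.sum_neg_distrib]
      refine Finset.sum_congr rfl fun i _ => ?_
      show - Real.sign (g t i) * g t i = -|g t i|
      rw [neg_mul, mul_comm, mul_sign_eq_abs]
    have := hval ▸ hc
    exact this.sub_const fstar
  have hScont : ContinuousOn S (Icc 0 T) := fun t ht =>
    ((hSd t ht).continuousAt).continuousWithinAt
  -- ℓ² ≤ ℓ¹
  have hnorm : ∀ t, ‖g t‖ ≤ ∑ i, |g t i| := by
    intro t
    rw [EuclideanSpace.norm_eq]
    have h1 : ∑ i, ‖g t i‖ ^ 2 ≤ (∑ i, |g t i|) ^ 2 := by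
      simp only [Real.norm_eq_abs]
      exact Finset.sum_sq_le_sq_sum_of_nonneg (fun i _ => abs_nonneg _)
    calc Real.sqrt (∑ i, ‖g t i‖ ^ 2) ≤ Real.sqrt ((∑ i, |g t i|) ^ 2) :=
          Real.sqrt_le_sqrt h1
      _ = ∑ i, |g t i| := Real.sqrt_sq (Finset.sum_nonneg fun i _ => abs_nonneg _)
  -- the comparison function
  set B : ℝ → ℝ := fun t => (1/4) * (Real.sqrt μ * t - 2 * a) ^ 2 with hB
  have hBd : ∀ x : ℝ, HasDerivAt B
      ((1/2) * Real.sqrt μ * (Real.sqrt μ * x - 2 * a)) x := by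
    intro x
    have h1 : HasDerivAt (fun t : ℝ => Real.sqrt μ * t - 2 * a) (Real.sqrt μ) x := by
      simpa using ((hasDerivAt_id x).const_mul (Real.sqrt μ)).sub_const (2 * a)
    have h2 := (h1.pow 2).const_mul (1/4 : ℝ)
    exact h2.congr_deriv (by
      simp only [show (2:ℕ) - 1 = 1 from rfl, pow_one, Nat.cast_ofNat]; ring)
  set b : ℝ := min T tstar with hb
  have hbT : b ≤ T := min_le_left _ _
  have hkey : ∀ x ∈ Icc (0:ℝ) b, S x ≤ B x := by
    refine image_le_of_deriv_right_lt_deriv_boundary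
      (f := S) (f' := fun t => -(∑ i, |g t i|)) (B := B)
      (B' := fun x => (1/2) * Real.sqrt μ * (Real.sqrt μ * x - 2 * a))
      (hScont.mono (Icc_subset_Icc le_rfl hbT))
      (fun x hx => (hSd x ⟨hx.1, hx.2.le.trans hbT⟩).hasDerivWithinAt)
      ?_ hBd ?_
    · rw [hS0]; simp [hB]; nlinarith [sq_nonneg a]
    · intro x hx hcontact
      have hxlt : x < tstar := lt_of_lt_of_le hx.2 (min_le_right _ _)
      have hc : 0 < 2 * a - Real.sqrt μ * x := by
        rw [htstar_eq] at hxlt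
        have := (lt_div_iff₀ hμ').1 hxlt
        nlinarith
      set c : ℝ := 2 * a - Real.sqrt μ * x with hcdef
      have hBx : B x = (1/4) * c ^ 2 := by rw [hB, hcdef]; ring_nf
      have hPLx := hPL (X x)
      have hgsq : 2 * μ * B x ≤ ‖g x‖ ^ 2 := by
        rw [← hcontact]; exact hPLx
      have hmu : μ = Real.sqrt μ ^ 2 := (Real.sq_sqrt hμ.le).symm
      have hlt : ((1/2) * Real.sqrt μ * c) ^ 2 < ‖g x‖ ^ 2 := by
        have : 2 * μ * B x = (1/2) * μ * c ^ 2 := by rw [hBx]; ring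
        nlinarith [sq_nonneg c, mul_pos hμ (mul_pos (mul_pos (by norm_num : (0:ℝ) < 1/4) hc) hc)]
      have hglt : (1/2) * Real.sqrt μ * c < ‖g x‖ :=
        lt_of_pow_lt_pow_left₀ 2 (norm_nonneg _) hlt
      have h1 : -(∑ i, |g x i|) ≤ -‖g x‖ := neg_le_neg (hnorm x)
      have h2 : -‖g x‖ < -((1/2) * Real.sqrt μ * c) := neg_lt_neg hglt
      calc -(∑ i, |g x i|) ≤ -‖g x‖ := h1
        _ < -((1/2) * Real.sqrt μ * c) := h2
        _ = (1/2) * Real.sqrt μ * (Real.sqrt μ * x - 2 * a) := by rw [hcdef]; ring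
  constructor
  · intro t ht htle
    exact hkey t ⟨ht.1, le_min ht.2 htle⟩
  · intro hTstar
    refine ⟨tstar, ⟨htstar0, le_rfl⟩, ?_⟩
    have hmem : tstar ∈ Icc (0:ℝ) b := ⟨htstar0, le_min hTstar le_rfl⟩
    have h1 := hkey tstar hmem
    have hBt : B tstar = 0 := by
      rw [hB, htstar_eq]
      field_simp
      norm_num
    rw [hBt] at h1
    exact le_antisymm h1 (hSnn (X tstar))
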